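/- Let ε ∈ (0,1) and suppose inf_{‖y‖₁=1} μ(y) ≥ (1−ε)^{−1}. Then liminf_{‖x‖₁→∞} ‖x‖₁^{−1} · log ℙ(T(0,x) ≤ (1−ε)μ(x)) ≥ −log(2d). -/

import Mathlib

open MeasureTheory ProbabilityTheory Filter
open scoped ENNReal ProbabilityTheory

noncomputable section

/-- `ℤ^d`. -/
abbrev Zd (d : ℕ) := Fin d → ℤ

/-- The `ℓ¹`-norm on `ℤ^d`. -/
def norm1 {d : ℕ} (x : Zd d) : ℝ := ∑ i, |(x i : ℝ)|

/-- The `ℓ¹`-norm on `ℝ^d`. -/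
def norm1R {d : ℕ} (x : Fin d → ℝ) : ℝ := ∑ i, |x i|

/-- Canonical embedding of `ℤ^d` into `ℝ^d`. -/
def toR {d : ℕ} (x : Zd d) : Fin d → ℝ := fun i => (x i : ℝ)

/-- Given a frozen environment (`ωe z` = number of frogs initially at `z`,
`Se z ℓ k` = position at time `k` of the `ℓ`-th frog started at `z`), the passage time
`τ(x,y)`: the first time at which one of the frogs initially at `x` hits `y`
(`∞` if there is no such time, in particular if `ωe x = 0`). -/
def tauE {d : ℕ} (ωe : Zd d → ℕ) (Se : Zd d → ℕ → ℕ → Zd d) (x y : Zd d) : ℝ≥0∞ :=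
  sInf {r : ℝ≥0∞ | ∃ k : ℕ, (∃ ℓ : ℕ, 1 ≤ ℓ ∧ ℓ ≤ ωe x ∧ Se x ℓ k = y) ∧ r = k}

/-- The first passage time `T(x,y)` of the frog model, for a frozen environment. -/
def TE {d : ℕ} (ωe : Zd d → ℕ) (Se : Zd d → ℕ → ℕ → Zd d) (x y : Zd d) : ℝ≥0∞ :=
  sInf {r : ℝ≥0∞ | ∃ m : ℕ, 1 ≤ m ∧ ∃ c : ℕ → Zd d, c 0 = x ∧ c m = y ∧
    r = ∑ i ∈ Finset.range m, tauE ωe Se (c i) (c (i + 1))}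

variable {d : ℕ} {Ω : Type*}

/-- The first passage time `T(x,y)` as a random variable. -/
def TT (ω : Zd d → Ω → ℕ) (S : Zd d → ℕ → ℕ → Ω → Zd d) (x y : Zd d) (a : Ω) : ℝ≥0∞ :=
  TE (fun z => ω z a) (fun z ℓ k => S z ℓ k a) x y

/-- Value spaces for the joint family consisting of the initial configuration `ω`
(indexed by sites) and the increments of the random walks (indexed by site, label, time). -/
def MVal (d : ℕ) : Zd d ⊕ (Zd d × ℕ × ℕ) → Type
  | .inl _ => ℕ
  | .inr _ => Zd d

instance (d : ℕ) (i : Zd d ⊕ (Zd d × ℕ × ℕ)) : MeasurableSpace (MVal d i) := by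
  cases i <;> (unfold MVal; infer_instance)

/-- The joint family consisting of the variables `ω x` and of the increments
`S_{k+1}(x,ℓ) - S_k(x,ℓ)` of the random walks. -/
def mfam (ω : Zd d → Ω → ℕ) (S : Zd d → ℕ → ℕ → Ω → Zd d) :
    ∀ i : Zd d ⊕ (Zd d × ℕ × ℕ), Ω → MVal d i
  | .inl x => fun a => ω x a
  | .inr q => fun a => S q.1 q.2.1 (q.2.2 + 1) a - S q.1 q.2.1 q.2.2 a

/-- The frog model on `ℤ^d`: `ω` is an i.i.d. family (not concentrated at `0`) giving the
initial configuration of frogs, and the `S (x,ℓ)` are simple random walks started at `x`,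
the walks and the initial configuration being all jointly independent. -/
def IsFrogModel (d : ℕ) {Ω : Type*} [MeasurableSpace Ω] (P : Measure Ω)
    (ω : Zd d → Ω → ℕ) (S : Zd d → ℕ → ℕ → Ω → Zd d) : Prop :=
  IsProbabilityMeasure P ∧
  (∀ x, Measurable (ω x)) ∧
  (∀ x ℓ k, Measurable (S x ℓ k)) ∧
  -- the walks start at their base point
  (∀ x ℓ a, S x ℓ 0 a = x) ∧
  -- the `ω x` are identically distributed
  (∀ x, IdentDistrib (ω x) (ω 0) P P) ∧
  -- each step of each walk is uniformly distributed on the `2d` unit vectors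
  (∀ (x : Zd d) (ℓ k : ℕ) (ξ : Zd d), norm1 ξ = 1 →
    P {a | S x ℓ (k + 1) a - S x ℓ k a = ξ} = 1 / (2 * d)) ∧
  -- joint independence of the initial configuration and of all steps of all walks
  iIndepFun (mfam ω S) P ∧
  -- the law of `ω 0` is not concentrated at `0`
  P {a | 1 ≤ ω 0 a} ≠ 0

/-- `μ` is the time constant: a norm on `ℝ^d` such that, almost surely on `{ω(0) ≥ 1}`,
`(T(0,x) - μ(x))/‖x‖₁ → 0` as `‖x‖₁ → ∞`. -/
def IsTimeConstant {d : ℕ} {Ω : Type*} [MeasurableSpace Ω] (P : Measure Ω)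
    (ω : Zd d → Ω → ℕ) (S : Zd d → ℕ → ℕ → Ω → Zd d) (μ : (Fin d → ℝ) → ℝ) : Prop :=
  (∀ x y, μ (x + y) ≤ μ x + μ y) ∧
  (∀ (c : ℝ) (x), μ (c • x) = |c| * μ x) ∧
  (∀ x, μ x = 0 → x = 0) ∧
  ∀ᵐ a ∂P, 1 ≤ ω 0 a →
    Tendsto (fun x : Zd d => ((TT ω S 0 x a).toReal - μ (toR x)) / norm1 x)
      (comap norm1 atTop) (nhds 0)



section AuxLemmas
variable {d : ℕ}

lemma aux_list_sum_range_getD {M : Type*} [AddCommMonoid M] (l : List M) :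
    ∑ k ∈ Finset.range l.length, l.getD k 0 = l.sum := by
  induction l with
  | nil => simp
  | cons a l ih =>
    rw [List.length_cons, Finset.sum_range_succ']
    simp only [List.getD_cons_succ, List.getD_cons_zero, List.sum_cons, ih]
    exact add_comm _ _

lemma aux_norm1_single (i : Fin d) (s : ℤ) : norm1 (Pi.single i s : Zd d) = |(s : ℝ)| := by
  unfold norm1
  rw [Finset.sum_eq_single i]
  · simp
  · intro j _ hj
    simp [Pi.single_apply, hj]
  · simp

lemma aux_exists_path (x : Zd d) :
    ∃ stp : ℕ → Zd d, (∀ k < ∑ i, (x i).natAbs, norm1 (stp k) = 1) ∧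
      ∑ k ∈ Finset.range (∑ i, (x i).natAbs), stp k = x := by
  classical
  set L : List (Zd d) := (List.finRange d).flatMap
      (fun i => List.replicate (x i).natAbs (Pi.single i (Int.sign (x i)))) with hLdef
  have hlen : L.length = ∑ i, (x i).natAbs := by
    rw [hLdef, List.length_flatMap, Fin.sum_univ_def]
    congr 1
    simp [Function.comp]
  have hsum : L.sum = x := by
    rw [hLdef, List.flatMap, List.sum_flatten, List.map_map]
    have : ∀ i : Fin d,
        (List.sum ∘ fun i => List.replicate (x i).natAbs (Pi.single i (x i).sign)) i
          = Pi.single i (x i) := by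
      intro i
      simp only [Function.comp_apply, List.sum_replicate]
      rw [← Pi.single_smul, nsmul_eq_mul, mul_comm, Int.sign_mul_natAbs]
    rw [List.map_congr_left fun i _ => this i, ← Fin.sum_univ_def,
      Finset.univ_sum_single]
  refine ⟨fun k => L.getD k 0, ?_, ?_⟩
  · intro k hk
    rw [← hlen] at hk
    show norm1 (L.getD k 0) = 1
    rw [List.getD_eq_getElem L 0 hk]
    have hmem := List.getElem_mem hk
    have hmem2 : L[k] ∈ (List.finRange d).flatMap
        (fun i => List.replicate (x i).natAbs (Pi.single i (Int.sign (x i)))) := hmem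
    rw [List.mem_flatMap] at hmem2
    obtain ⟨i, -, hmem⟩ := hmem2
    have hne : (x i).natAbs ≠ 0 := by
      rintro h0; rw [h0] at hmem; simp at hmem
    have hx : x i ≠ 0 := Int.natAbs_ne_zero.mp hne
    rw [List.eq_of_mem_replicate hmem, aux_norm1_single]
    rcases Int.lt_or_lt_of_ne hx with h | h
    · rw [Int.sign_eq_neg_one_of_neg h]; norm_num
    · rw [Int.sign_eq_one_of_pos h]; norm_num
  · rw [← hlen, aux_list_sum_range_getD, hsum]

lemma aux_norm1_eq (x : Zd d) : norm1 x = ((∑ i, (x i).natAbs : ℕ) : ℝ) := by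
  unfold norm1
  push_cast [Nat.cast_natAbs]
  rfl

end AuxLemmas

/-- The sets in the value spaces used for the independence computation. -/
def pathSets (d : ℕ) (stp : ℕ → Zd d) : ∀ i : Zd d ⊕ (Zd d × ℕ × ℕ), Set (MVal d i)
  | .inl _ => {m : ℕ | 1 ≤ m}
  | .inr q => {stp q.2.2}

lemma pathSets_meas (d : ℕ) (stp : ℕ → Zd d) :
    ∀ i, MeasurableSet (pathSets d stp i) := by
  intro i
  cases i with
  | inl z => exact MeasurableSpace.measurableSet_top
  | inr q =>
    have h : @MeasurableSet (Zd d) inferInstance {stp q.2.2} := measurableSet_singleton _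
    exact h

/-- **Left tail lower bound (Section 1.2).**
Let `ε ∈ (0,1)` and suppose `inf_{‖y‖₁ = 1} μ(y) ≥ (1−ε)⁻¹`. Then
`liminf_{‖x‖₁ → ∞} ‖x‖₁^{-1} log ℙ(T(0,x) ≤ (1−ε) μ(x)) ≥ −log (2d)`. -/
theorem frog_left_tail_lower_bound (d : ℕ) (hd : 2 ≤ d)
    {Ω : Type*} [MeasurableSpace Ω] (P : Measure Ω)
    (ω : Zd d → Ω → ℕ) (S : Zd d → ℕ → ℕ → Ω → Zd d)
    (hfrog : IsFrogModel d P ω S)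
    (μ : (Fin d → ℝ) → ℝ) (hμ : IsTimeConstant P ω S μ)
    (ε : ℝ) (hε0 : 0 < ε) (hε1 : ε < 1)
    (hinf : (1 - ε)⁻¹ ≤ sInf {r : ℝ | ∃ y : Fin d → ℝ, norm1R y = 1 ∧ r = μ y}) :
    ((-Real.log (2 * d) : ℝ) : EReal) ≤
      liminf
        (fun x : Zd d =>
          (((norm1 x)⁻¹ : ℝ) : EReal) *
            ENNReal.log
              ((P[|{a | 1 ≤ ω 0 a}])
                {a | TT ω S 0 x a ≤ ENNReal.ofReal ((1 - ε) * μ (toR x))}))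
        (comap norm1 atTop) := by
  classical
  obtain ⟨hP, hωm, hSm, hS0, hid, hstep, hindep, hne⟩ := hfrog
  obtain ⟨hsub, hhom, hdefz, htc⟩ := hμ
  have hμ0 : μ 0 = 0 := by
    have := hhom 0 0
    simpa using this
  have hμnn : ∀ y, 0 ≤ μ y := by
    intro y
    have h2 : μ (-y) = μ y := by
      have := hhom (-1) y
      simpa using this
    have h1 := hsub y (-y)
    rw [add_neg_cancel, hμ0, h2] at h1
    linarith
  have hCmeas : MeasurableSet {a | 1 ≤ ω 0 a} :=
    hωm 0 (MeasurableSpace.measurableSet_top (s := {m : ℕ | 1 ≤ m}))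
  have h1ε : (0:ℝ) < 1 - ε := by linarith
  refine Filter.le_liminf_of_le ?_ ?_
  · exact Filter.isCobounded_ge_of_top
  have hev : ∀ᶠ x : Zd d in comap norm1 atTop, (1:ℝ) ≤ norm1 x :=
    eventually_comap.mpr ((eventually_ge_atTop (1:ℝ)).mono fun t ht y hy => hy ▸ ht)
  refine hev.mono fun x hx => ?_
  -- setup
  set n : ℕ := ∑ i, (x i).natAbs with hndef
  have hnx : norm1 x = (n : ℝ) := aux_norm1_eq x
  have hnormpos : (0:ℝ) < norm1 x := lt_of_lt_of_le one_pos hx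
  have hnne : (n : ℝ) ≠ 0 := by rw [← hnx]; exact ne_of_gt hnormpos
  obtain ⟨stp, hstp1, hstpsum⟩ := aux_exists_path x
  set Fs : Finset (Zd d ⊕ (Zd d × ℕ × ℕ)) :=
    insert (Sum.inl 0) ((Finset.range n).image fun k => Sum.inr ((0 : Zd d), 1, k)) with hFs
  have hinl_notmem : (Sum.inl (0:Zd d) : Zd d ⊕ (Zd d × ℕ × ℕ)) ∉
      (Finset.range n).image fun k => Sum.inr ((0 : Zd d), 1, k) := by simp
  have hprodeq := hindep.measure_inter_preimage_eq_mul Fs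
    (sets := pathSets d stp) (fun i _ => pathSets_meas d stp i)
  rw [hFs, Finset.prod_insert hinl_notmem,
    Finset.prod_image (fun a _ b _ h => by simpa using h)] at hprodeq
  have hCpre : (mfam ω S (Sum.inl (0:Zd d)))⁻¹' pathSets d stp (Sum.inl 0)
      = {a | 1 ≤ ω 0 a} := rfl
  rw [hCpre] at hprodeq
  have hfac : ∀ k ∈ Finset.range n,
      P ((mfam ω S (Sum.inr ((0:Zd d), 1, k)))⁻¹' pathSets d stp (Sum.inr ((0:Zd d), 1, k)))
        = 1 / (2 * d) := by
    intro k hk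
    exact hstep 0 1 k (stp k) (hstp1 k (Finset.mem_range.mp hk))
  rw [Finset.prod_congr rfl hfac, Finset.prod_const, Finset.card_range] at hprodeq
  set A : Set Ω := ⋂ i ∈ Fs, (mfam ω S i)⁻¹' pathSets d stp i with hA
  -- the event inclusion
  have hAsub : A ⊆ {a | 1 ≤ ω 0 a} ∩
      {a | TT ω S 0 x a ≤ ENNReal.ofReal ((1 - ε) * μ (toR x))} := by
    intro a ha
    have haC : 1 ≤ ω 0 a :=
      Set.mem_iInter₂.mp ha (Sum.inl 0) (Finset.mem_insert_self _ _)
    have hastep : ∀ k < n, S 0 1 (k+1) a - S 0 1 k a = stp k := by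
      intro k hk
      have hmemFs : (Sum.inr ((0:Zd d), 1, k) : Zd d ⊕ (Zd d × ℕ × ℕ)) ∈ Fs :=
        Finset.mem_insert_of_mem (Finset.mem_image_of_mem _ (Finset.mem_range.mpr hk))
      exact Set.mem_iInter₂.mp ha _ hmemFs
    have hwalk : S 0 1 n a = x := by
      have htel := Finset.sum_range_sub (fun k => S 0 1 k a) n
      rw [Finset.sum_congr rfl (fun k hk => hastep k (Finset.mem_range.mp hk)),
        hstpsum, hS0 0 1 a] at htel
      simpa using htel.symm
    refine ⟨haC, ?_⟩
    have htau : tauE (fun z => ω z a) (fun z ℓ k => S z ℓ k a) 0 x ≤ (n : ℝ≥0∞) :=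
      sInf_le ⟨n, ⟨1, le_refl 1, haC, hwalk⟩, rfl⟩
    set c : ℕ → Zd d := fun i => if i = 0 then 0 else x with hcdef
    have hc0 : c 0 = 0 := by simp [hcdef]
    have hc1 : c 1 = x := by simp [hcdef]
    have hTE : TT ω S 0 x a ≤ ∑ i ∈ Finset.range 1,
        tauE (fun z => ω z a) (fun z ℓ k => S z ℓ k a) (c i) (c (i+1)) :=
      sInf_le ⟨1, le_refl 1, c, hc0, hc1, rfl⟩
    rw [Finset.sum_range_one, hc0, hc1] at hTE
    refine le_trans (le_trans hTE htau) ?_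
    -- (n:ℝ≥0∞) ≤ ofReal ((1-ε) μ (toR x))
    have hμx : (norm1 x) * (1-ε)⁻¹ ≤ μ (toR x) := by
      set y : Fin d → ℝ := (norm1 x)⁻¹ • toR x with hy
      have hy1 : norm1R y = 1 := by
        unfold norm1R
        have : ∀ i, |y i| = (norm1 x)⁻¹ * |toR x i| := by
          intro i
          rw [hy]
          simp only [Pi.smul_apply, smul_eq_mul, abs_mul, abs_inv,
            abs_of_pos hnormpos]
        rw [Finset.sum_congr rfl fun i _ => this i, ← Finset.mul_sum]
        have h2 : ∑ i, |toR x i| = norm1 x := rfl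
        rw [h2, inv_mul_cancel₀ (ne_of_gt hnormpos)]
      have hbdd : BddBelow {r : ℝ | ∃ y', norm1R y' = 1 ∧ r = μ y'} :=
        ⟨0, fun r hr => by obtain ⟨y', -, hr'⟩ := hr; exact hr' ▸ hμnn y'⟩
      have hμy : (1-ε)⁻¹ ≤ μ y :=
        le_trans hinf (csInf_le hbdd ⟨y, hy1, rfl⟩)
      have hμeq : μ (toR x) = norm1 x * μ y := by
        have h := hhom (norm1 x) y
        rw [hy, smul_inv_smul₀ (ne_of_gt hnormpos)] at h
        rw [h, abs_of_pos hnormpos]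
      rw [hμeq]
      exact mul_le_mul_of_nonneg_left hμy (le_of_lt hnormpos)
    have hfinal : (n:ℝ) ≤ (1 - ε) * μ (toR x) := by
      have hh := mul_le_mul_of_nonneg_left hμx (le_of_lt h1ε)
      calc (n:ℝ) = norm1 x := hnx.symm
      _ = (1-ε) * (norm1 x * (1-ε)⁻¹) := by field_simp
      _ ≤ (1-ε) * μ (toR x) := hh
    calc (n : ℝ≥0∞) = ENNReal.ofReal (n:ℝ) := by simp
    _ ≤ ENNReal.ofReal ((1-ε) * μ (toR x)) := ENNReal.ofReal_le_ofReal hfinal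
  -- probability lower bound
  have hPbound : (2 * d : ℝ≥0∞)⁻¹ ^ n ≤
      (P[|{a | 1 ≤ ω 0 a}]) {a | TT ω S 0 x a ≤ ENNReal.ofReal ((1 - ε) * μ (toR x))} := by
    rw [ProbabilityTheory.cond_apply hCmeas]
    have hPA : P A = P {a | 1 ≤ ω 0 a} * (2 * d : ℝ≥0∞)⁻¹ ^ n := by
      rw [hA, hprodeq, one_div]
    calc (2 * d : ℝ≥0∞)⁻¹ ^ n
        = (P {a | 1 ≤ ω 0 a})⁻¹ * (P {a | 1 ≤ ω 0 a} * (2 * d : ℝ≥0∞)⁻¹ ^ n) := by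
          rw [← mul_assoc, ENNReal.inv_mul_cancel hne (measure_ne_top P _), one_mul]
    _ = (P {a | 1 ≤ ω 0 a})⁻¹ * P A := by rw [hPA]
    _ ≤ _ := by
        refine mul_le_mul_right (measure_mono ?_) _
        exact hAsub
  -- logarithm computation
  have htoReal : ((2 * d : ℝ≥0∞)).toReal = 2 * (d:ℝ) := by simp
  have hdpos : (0:ℝ) < 2 * (d:ℝ) := by
    have : (2:ℝ) ≤ (d:ℝ) := by exact_mod_cast hd
    linarith
  have hlogstep : ENNReal.log ((2 * d : ℝ≥0∞)⁻¹ ^ n)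
      = (((n:ℝ) * (- Real.log (2 * d)) : ℝ) : EReal) := by
    rw [ENNReal.log_pow, ENNReal.log_inv,
      ENNReal.log_pos_real' (by rw [htoReal]; exact hdpos), htoReal,
      ← EReal.coe_neg, ← EReal.coe_coe_eq_natCast, ← EReal.coe_mul]
  have hlogp : (((n:ℝ) * (- Real.log (2 * d)) : ℝ) : EReal) ≤
      ENNReal.log ((P[|{a | 1 ≤ ω 0 a}])
        {a | TT ω S 0 x a ≤ ENNReal.ofReal ((1 - ε) * μ (toR x))}) := by
    rw [← hlogstep]
    exact ENNReal.log_monotone hPbound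
  have hc0' : (0:EReal) ≤ (((norm1 x)⁻¹ : ℝ) : EReal) :=
    EReal.coe_nonneg.mpr (inv_nonneg.mpr (le_of_lt hnormpos))
  calc ((-Real.log (2 * d) : ℝ) : EReal)
      = (((norm1 x)⁻¹ * ((n:ℝ) * (- Real.log (2 * d))) : ℝ) : EReal) := by
        congr 1
        rw [hnx, ← mul_assoc, inv_mul_cancel₀ hnne, one_mul]
  _ = (((norm1 x)⁻¹ : ℝ) : EReal) * (((n:ℝ) * (- Real.log (2 * d)) : ℝ) : EReal) :=
        EReal.coe_mul _ _
  _ ≤ _ := mul_le_mul_of_nonneg_left hlogp hc0'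


end
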